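/- Consider the nonlinear reaction-diffusion PDE ∂u/∂t(t,x) = κ(u(t,x))·∂²u/∂x²(t,x) + r(u(t,x))·u(t,x) + f(t,x) on (0,T] × [0,1] with Dirichlet boundary conditions u(t,0) = d₀(t), u(t,1) = d₁(t) for t ∈ [0,T], where d₀, d₁ ∈ C⁰([0,T]), f ∈ C⁰([0,T] × [0,1]), and κ, r ∈ C⁰(ℝ) satisfy κ(u) > 0 for all u ∈ ℝ and sup{ (σ + r(u))/κ(u) : u ∈ ℝ } < π² for a constant σ > 0. Then there exist constants θ ∈ (0,π) and φ > 0 with θ + φ < π such that, with η(x) := sin(θx + φ), every classical solution u ∈ C⁰([0,T] × [0,1]) ∩ C¹((0,T] × [0,1]) with u[t] ∈ C²([0,1]) for t ∈ (0,T] satisfies, for all ζ ∈ [0,σ) and t ∈ (0,T]: ‖u[t]‖_{∞,η} ≤ max( exp(−ζt)·‖u[0]‖_{∞,η}, sup_{0<s≤t} max( |d₀(s)|/η(0), |d₁(s)|/η(1), ‖f[s]‖_{∞,η}/(σ−ζ) )·exp(−ζ(t−s)) ). -/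

import Mathlib

open Set Filter


private lemma eta_pos {θ φ : ℝ} (hθ : θ ∈ Set.Ioo 0 Real.pi) (hφ : 0 < φ)
    (hθφ : θ + φ < Real.pi) {x : ℝ} (hx : x ∈ Set.Icc (0:ℝ) 1) :
    0 < Real.sin (θ * x + φ) := by
  apply Real.sin_pos_of_pos_of_lt_pi
  · nlinarith [hθ.1, hx.1]
  · nlinarith [hθ.1, hx.2]

private lemma second_deriv_nonpos {g g' : ℝ → ℝ} {x a b g'' : ℝ}
    (hx : x ∈ Set.Ioo a b)
    (hg : ∀ y ∈ Set.Ioo a b, HasDerivAt g (g' y) y)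
    (hg'' : HasDerivAt g' g'' x)
    (hmax : ∀ y ∈ Set.Ioo a b, g y ≤ g x) : g'' ≤ 0 := by
  by_contra h
  push_neg at h
  have hioo : Set.Ioo a b ∈ nhds x := isOpen_Ioo.mem_nhds hx
  have hlmax : IsLocalMax g x := by filter_upwards [hioo] with y hy using hmax y hy
  have hg'x : g' x = 0 := hlmax.hasDerivAt_eq_zero (hg x hx)
  have hs := hasDerivAt_iff_tendsto_slope.1 hg''
  have hev : ∀ᶠ y in nhdsWithin x {x}ᶜ, 0 < slope g' x y :=
    hs.eventually (eventually_gt_nhds h)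
  have hev' : ∀ᶠ y in nhdsWithin x (Set.Ioi x), 0 < slope g' x y ∧ y ∈ Set.Ioo a b := by
    refine Filter.Eventually.and ?_ ?_
    · exact nhdsWithin_mono x (fun y hy => Set.mem_compl_singleton_iff.2 (ne_of_gt hy)) hev
    · exact mem_nhdsWithin_of_mem_nhds hioo
  obtain ⟨u, hu, hsub⟩ := mem_nhdsGT_iff_exists_Ioo_subset.1 hev'
  set z := (x + u) / 2 with hz
  have hxz : x < z := by simp only [hz]; linarith [Set.mem_Ioi.1 hu]
  have hzu : z < u := by simp only [hz]; linarith [Set.mem_Ioi.1 hu]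
  have hzmem : z ∈ Set.Ioo x u := ⟨hxz, hzu⟩
  have hIccsub : Set.Icc x z ⊆ Set.Ioo a b := by
    intro y hy
    rcases eq_or_lt_of_le hy.1 with h'|h'
    · exact h' ▸ hx
    · exact (hsub ⟨h', lt_of_le_of_lt hy.2 hzu⟩).2
  obtain ⟨ξ, hξ, hξs⟩ := exists_hasDerivAt_eq_slope g g' hxz
    (fun y hy => (hg y (hIccsub hy)).continuousAt.continuousWithinAt)
    (fun y hy => hg y (hIccsub ⟨hy.1.le, hy.2.le⟩))
  have hξmem : ξ ∈ Set.Ioo x u := ⟨hξ.1, hξ.2.trans hzu⟩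
  have h1 : 0 < slope g' x ξ := (hsub hξmem).1
  have h2 : 0 < g' ξ := by
    rw [slope_def_field, hg'x, sub_zero] at h1
    have := mul_pos h1 (sub_pos.2 hξ.1)
    rwa [div_mul_cancel₀] at this
    exact (sub_pos.2 hξ.1).ne'
  rw [hξs] at h2
  have hgz : g z ≤ g x := hmax z (hIccsub ⟨hxz.le, le_refl z⟩)
  have : (g z - g x) / (z - x) ≤ 0 :=
    div_nonpos_of_nonpos_of_nonneg (by linarith) (by linarith)
  linarith

private lemma deriv_nonneg_of_left_max {ψ : ℝ → ℝ} {d t tb : ℝ} (ht : t ∈ Set.Ioc 0 tb)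
    (hd : HasDerivWithinAt ψ d (Set.Ioc 0 tb) t)
    (hmax : ∀ s ∈ Set.Ioc 0 tb, ψ s ≤ ψ t) : 0 ≤ d := by
  have hsub : Set.Ioc (0:ℝ) t ⊆ Set.Ioc 0 tb := Set.Ioc_subset_Ioc_right ht.2
  have hd' := hd.mono hsub
  have hslope := hasDerivWithinAt_iff_tendsto_slope.1 hd'
  have heq : Set.Ioc (0:ℝ) t \ {t} = Set.Ioo 0 t := by
    ext y; simp only [Set.mem_diff, Set.mem_Ioc, Set.mem_Ioo, Set.mem_singleton_iff]
    constructor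
    · rintro ⟨⟨h1, h2⟩, h3⟩; exact ⟨h1, lt_of_le_of_ne h2 h3⟩
    · rintro ⟨h1, h2⟩; exact ⟨⟨h1, h2.le⟩, ne_of_lt h2⟩
  rw [heq] at hslope
  have hne : (nhdsWithin t (Set.Ioo 0 t)).NeBot := by
    rw [← mem_closure_iff_nhdsWithin_neBot, closure_Ioo (ne_of_lt ht.1)]
    exact ⟨ht.1.le, le_refl t⟩
  refine ge_of_tendsto hslope ?_
  filter_upwards [self_mem_nhdsWithin] with y hy
  have h1 : ψ y ≤ ψ t := hmax y (hsub ⟨hy.1, hy.2.le⟩)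
  rw [slope_def_field]
  exact div_nonneg_iff.2 (Or.inr ⟨by linarith, by linarith [hy.2]⟩)


set_option maxHeartbeats 1000000 in
private lemma one_sided (θ φ σ ζ tb : ℝ)
    (hθ : θ ∈ Set.Ioo 0 Real.pi) (hφ : 0 < φ) (hθφ : θ + φ < Real.pi)
    (hζ : 0 ≤ ζ) (hζσ : ζ < σ) (htb : 0 < tb)
    (a b f u ut ux uxx : ℝ → ℝ → ℝ)
    (ha : ∀ t ∈ Set.Ioc (0:ℝ) tb, ∀ x ∈ Set.Icc (0:ℝ) 1, 0 < a t x)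
    (hab : ∀ t ∈ Set.Ioc (0:ℝ) tb, ∀ x ∈ Set.Icc (0:ℝ) 1, σ + b t x ≤ a t x * θ ^ 2)
    (hu_cont : ContinuousOn (fun p : ℝ × ℝ => u p.1 p.2) (Set.Icc 0 tb ×ˢ Set.Icc 0 1))
    (hut : ∀ t ∈ Set.Ioc (0:ℝ) tb, ∀ x ∈ Set.Icc (0:ℝ) 1,
      HasDerivWithinAt (fun τ => u τ x) (ut t x) (Set.Ioc 0 tb) t)
    (hux : ∀ t ∈ Set.Ioc (0:ℝ) tb, ∀ x ∈ Set.Icc (0:ℝ) 1,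
      HasDerivWithinAt (u t) (ux t x) (Set.Icc 0 1) x)
    (huxx : ∀ t ∈ Set.Ioc (0:ℝ) tb, ∀ x ∈ Set.Icc (0:ℝ) 1,
      HasDerivWithinAt (ux t) (uxx t x) (Set.Icc 0 1) x)
    (hpde : ∀ t ∈ Set.Ioc (0:ℝ) tb, ∀ x ∈ Set.Icc (0:ℝ) 1,
      ut t x = a t x * uxx t x + b t x * u t x + f t x)
    (M : ℝ) (hM : 0 ≤ M)
    (h0 : ∀ x ∈ Set.Icc (0:ℝ) 1, u 0 x ≤ M * Real.exp (ζ * tb) * Real.sin (θ * x + φ))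
    (hb0 : ∀ s ∈ Set.Ioc (0:ℝ) tb, u s 0 ≤ M * Real.exp (ζ * (tb - s)) * Real.sin (θ * 0 + φ))
    (hb1 : ∀ s ∈ Set.Ioc (0:ℝ) tb, u s 1 ≤ M * Real.exp (ζ * (tb - s)) * Real.sin (θ * 1 + φ))
    (hf : ∀ s ∈ Set.Ioc (0:ℝ) tb, ∀ x ∈ Set.Ioo (0:ℝ) 1,
      f s x ≤ (σ - ζ) * M * Real.exp (ζ * (tb - s)) * Real.sin (θ * x + φ)) :
    ∀ x ∈ Set.Icc (0:ℝ) 1, u tb x ≤ M * Real.sin (θ * x + φ) := by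
  set η : ℝ → ℝ := fun x => Real.sin (θ * x + φ) with hηdef
  have hη : ∀ x ∈ Set.Icc (0:ℝ) 1, 0 < η x := fun x hx => eta_pos hθ hφ hθφ hx
  by_contra hcon
  push_neg at hcon
  obtain ⟨x₀, hx₀, hx₀lt⟩ := hcon
  set K : Set (ℝ × ℝ) := Set.Icc 0 tb ×ˢ Set.Icc 0 1 with hKdef
  set Ψ : ℝ × ℝ → ℝ := fun p => u p.1 p.2 * Real.exp (ζ * p.1) / η p.2 with hΨdef
  have hΨc : ContinuousOn Ψ K := by
    apply ContinuousOn.div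
    · exact hu_cont.mul
        ((Real.continuous_exp.comp (continuous_const.mul continuous_fst)).continuousOn)
    · exact (Real.continuous_sin.comp
        ((continuous_const.mul continuous_snd).add continuous_const)).continuousOn
    · intro p hp; exact (hη p.2 hp.2).ne'
  have hKc : IsCompact K := (isCompact_Icc.prod isCompact_Icc)
  have hKne : K.Nonempty :=
    ⟨(0, 0), Set.mk_mem_prod ⟨le_rfl, htb.le⟩ ⟨le_rfl, by norm_num⟩⟩
  obtain ⟨p, hpK, hpmax'⟩ := hKc.exists_isMaxOn hKne hΨc
  have hpmax : ∀ q ∈ K, Ψ q ≤ Ψ p := fun q hq => hpmax' hq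
  set N := Ψ p with hNdef
  -- N > M e^{ζ tb}
  have hN : M * Real.exp (ζ * tb) < N := by
    have h1 : Ψ (tb, x₀) ≤ N := hpmax (tb, x₀) ⟨Set.right_mem_Icc.2 htb.le, hx₀⟩
    have h2 : M * Real.exp (ζ * tb) < Ψ (tb, x₀) := by
      show M * Real.exp (ζ * tb) < u tb x₀ * Real.exp (ζ * tb) / η x₀
      rw [lt_div_iff₀ (hη x₀ hx₀)]
      have := Real.exp_pos (ζ * tb)
      nlinarith [hx₀lt]
    linarith
  have hNpos : 0 < N :=
    lt_of_le_of_lt (mul_nonneg hM (Real.exp_pos _).le) hN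
  -- p.1 > 0
  have ht0 : 0 < p.1 := by
    rcases eq_or_lt_of_le hpK.1.1 with h|h
    · exfalso
      have : Ψ p ≤ M * Real.exp (ζ * tb) := by
        show u p.1 p.2 * Real.exp (ζ * p.1) / η p.2 ≤ _
        rw [← h, mul_zero, Real.exp_zero, mul_one, div_le_iff₀ (hη p.2 hpK.2)]
        exact h0 p.2 hpK.2
      linarith
    · exact h
  have htmem : p.1 ∈ Set.Ioc (0:ℝ) tb := ⟨ht0, hpK.1.2⟩
  -- p.2 interior
  have hexp_comb : Real.exp (ζ * (tb - p.1)) * Real.exp (ζ * p.1) = Real.exp (ζ * tb) := by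
    rw [← Real.exp_add]; ring_nf
  have hx0 : 0 < p.2 := by
    rcases eq_or_lt_of_le hpK.2.1 with h|h
    · exfalso
      have hb := hb0 p.1 htmem
      rw [h] at hb
      have : Ψ p ≤ M * Real.exp (ζ * tb) := by
        show u p.1 p.2 * Real.exp (ζ * p.1) / η p.2 ≤ _
        rw [div_le_iff₀ (hη p.2 hpK.2)]
        calc u p.1 p.2 * Real.exp (ζ * p.1)
            ≤ M * Real.exp (ζ * (tb - p.1)) * η p.2 * Real.exp (ζ * p.1) := by
              nlinarith [Real.exp_pos (ζ * p.1), hb]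
          _ = M * Real.exp (ζ * tb) * η p.2 := by rw [← hexp_comb]; ring
      linarith
    · exact h
  have hx1 : p.2 < 1 := by
    rcases eq_or_lt_of_le hpK.2.2 with h|h
    · exfalso
      have hb := hb1 p.1 htmem
      rw [← h] at hb
      have : Ψ p ≤ M * Real.exp (ζ * tb) := by
        show u p.1 p.2 * Real.exp (ζ * p.1) / η p.2 ≤ _
        rw [div_le_iff₀ (hη p.2 hpK.2)]
        calc u p.1 p.2 * Real.exp (ζ * p.1)
            ≤ M * Real.exp (ζ * (tb - p.1)) * η p.2 * Real.exp (ζ * p.1) := by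
              nlinarith [Real.exp_pos (ζ * p.1), hb]
          _ = M * Real.exp (ζ * tb) * η p.2 := by rw [← hexp_comb]; ring
      linarith
    · exact h
  have hxmem : p.2 ∈ Set.Ioo (0:ℝ) 1 := ⟨hx0, hx1⟩
  have hxIcc : p.2 ∈ Set.Icc (0:ℝ) 1 := ⟨hx0.le, hx1.le⟩
  have hηs : 0 < η p.2 := hη p.2 hxIcc
  have hηp2 : η p.2 = Real.sin (θ * p.2 + φ) := rfl
  set c : ℝ := u p.1 p.2 / η p.2 with hcdef
  have huc : u p.1 p.2 = c * η p.2 := (div_mul_cancel₀ _ hηs.ne').symm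
  have hNc : N = c * Real.exp (ζ * p.1) := by
    show u p.1 p.2 * Real.exp (ζ * p.1) / η p.2 = _
    rw [hcdef]; field_simp
  have hcpos : 0 < c := by
    by_contra hc
    push_neg at hc
    have : N ≤ 0 := by
      rw [hNc]
      exact mul_nonpos_of_nonpos_of_nonneg hc (Real.exp_pos _).le
    linarith
  -- space maximum
  have hspace : ∀ y ∈ Set.Icc (0:ℝ) 1, u p.1 y ≤ c * η y := by
    intro y hy
    have h1 : Ψ (p.1, y) ≤ N := hpmax (p.1, y) ⟨⟨ht0.le, hpK.1.2⟩, hy⟩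
    have h2 : u p.1 y * Real.exp (ζ * p.1) / η y ≤ c * Real.exp (ζ * p.1) := by
      rw [← hNc]; exact h1
    rw [div_le_iff₀ (hη y hy)] at h2
    nlinarith [Real.exp_pos (ζ * p.1)]
  -- derivative of the weight
  have hlin : ∀ y : ℝ, HasDerivAt (fun z : ℝ => θ * z + φ) θ y := by
    intro y
    simpa using ((hasDerivAt_id y).const_mul θ).add_const φ
  -- second derivative test in space
  set g' : ℝ → ℝ := fun y => ux p.1 y - c * (Real.cos (θ * y + φ) * θ) with hg'def
  have hgys : ∀ y ∈ Set.Ioo (0:ℝ) 1, HasDerivAt (fun z => u p.1 z - c * η z) (g' y) y := by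
    intro y hy
    have h1 : HasDerivAt (u p.1) (ux p.1 y) y :=
      (hux p.1 htmem y (Set.Ioo_subset_Icc_self hy)).hasDerivAt (Icc_mem_nhds hy.1 hy.2)
    exact h1.sub (((hlin y).sin).const_mul c)
  have hg'' : HasDerivAt g' (uxx p.1 p.2 - c * (-Real.sin (θ * p.2 + φ) * θ * θ)) p.2 := by
    have h3 : HasDerivAt (ux p.1) (uxx p.1 p.2) p.2 :=
      (huxx p.1 htmem p.2 hxIcc).hasDerivAt (Icc_mem_nhds hx0 hx1)
    have h4 : HasDerivAt (fun z => Real.cos (θ * z + φ) * θ)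
        (-Real.sin (θ * p.2 + φ) * θ * θ) p.2 := ((hlin p.2).cos).mul_const θ
    exact h3.sub (h4.const_mul c)
  have hgmax : ∀ y ∈ Set.Ioo (0:ℝ) 1, u p.1 y - c * η y ≤ u p.1 p.2 - c * η p.2 := by
    intro y hy
    have h1 := hspace y (Set.Ioo_subset_Icc_self hy)
    have h2 : u p.1 p.2 - c * η p.2 = 0 := by rw [huc]; ring
    linarith
  have hsd : uxx p.1 p.2 - c * (-Real.sin (θ * p.2 + φ) * θ * θ) ≤ 0 :=
    second_deriv_nonpos hxmem hgys hg'' hgmax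
  have huxxle : uxx p.1 p.2 ≤ -c * θ ^ 2 * η p.2 := by
    rw [hηp2]; nlinarith [hsd]
  -- time derivative at the maximum
  have hψd : HasDerivWithinAt (fun s => u s p.2 * Real.exp (ζ * s))
      (ut p.1 p.2 * Real.exp (ζ * p.1) + u p.1 p.2 * (Real.exp (ζ * p.1) * ζ))
      (Set.Ioc 0 tb) p.1 := by
    have h1 := hut p.1 htmem p.2 hxIcc
    have h2 : HasDerivAt (fun s : ℝ => Real.exp (ζ * s)) (Real.exp (ζ * p.1) * ζ) p.1 := by
      simpa using (((hasDerivAt_id p.1).const_mul ζ)).exp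
    exact h1.mul h2.hasDerivWithinAt
  have hψmax : ∀ s ∈ Set.Ioc (0:ℝ) tb,
      u s p.2 * Real.exp (ζ * s) ≤ u p.1 p.2 * Real.exp (ζ * p.1) := by
    intro s hs
    have h1 : Ψ (s, p.2) ≤ N := hpmax (s, p.2) ⟨⟨hs.1.le, hs.2⟩, hxIcc⟩
    have h2 : u s p.2 * Real.exp (ζ * s) / η p.2 ≤
        u p.1 p.2 * Real.exp (ζ * p.1) / η p.2 := h1
    have h3 := mul_le_mul_of_nonneg_right h2 hηs.le
    rwa [div_mul_cancel₀ _ hηs.ne', div_mul_cancel₀ _ hηs.ne'] at h3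
  have hd0 : 0 ≤ ut p.1 p.2 * Real.exp (ζ * p.1) + u p.1 p.2 * (Real.exp (ζ * p.1) * ζ) :=
    deriv_nonneg_of_left_max htmem hψd hψmax
  have hut_ge : -(ζ * u p.1 p.2) ≤ ut p.1 p.2 := by
    nlinarith [Real.exp_pos (ζ * p.1)]
  -- combine with the PDE
  have hpd := hpde p.1 htmem p.2 hxIcc
  have hfb := hf p.1 htmem p.2 hxmem
  have hapos := ha p.1 htmem p.2 hxIcc
  have habb := hab p.1 htmem p.2 hxIcc
  have hcη : 0 < c * η p.2 := mul_pos hcpos hηs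
  rw [huc] at hut_ge hpd
  rw [← hηp2] at hfb
  have h5 : a p.1 p.2 * uxx p.1 p.2 ≤ a p.1 p.2 * (-c * θ ^ 2 * η p.2) :=
    mul_le_mul_of_nonneg_left huxxle hapos.le
  have hstep := mul_le_mul_of_nonneg_right
    (by linarith : b p.1 p.2 - a p.1 p.2 * θ ^ 2 ≤ -σ) hcη.le
  have h8 : (σ - ζ) * (c * η p.2) ≤
      (σ - ζ) * (M * Real.exp (ζ * (tb - p.1)) * η p.2) := by nlinarith [h5, hstep]
  have h9 : c * η p.2 ≤ M * Real.exp (ζ * (tb - p.1)) * η p.2 :=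
    (mul_le_mul_iff_right₀ (by linarith : (0:ℝ) < σ - ζ)).1 h8
  have hkey : c ≤ M * Real.exp (ζ * (tb - p.1)) := (mul_le_mul_iff_left₀ hηs).1 h9
  have hNle : N ≤ M * Real.exp (ζ * tb) := by
    rw [hNc, ← hexp_comb]
    nlinarith [Real.exp_pos (ζ * p.1)]
  linarith

private lemma exp_cancel (a b : ℝ) : Real.exp (-a * b) * Real.exp (a * b) = 1 := by
  rw [← Real.exp_add, neg_mul, neg_add_cancel, Real.exp_zero]


set_option maxHeartbeats 1000000 in
/-- **Example 3.1** (Karafyllis–Krstic): nonlinear reaction–diffusion PDE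
`u_t = κ(u)u_xx + r(u)u + f` with Dirichlet boundary inputs. If `κ > 0` and
`sup{(σ + r(v))/κ(v) : v ∈ ℝ} < π²`, then there exist `θ ∈ (0,π)` and `φ > 0` with
`θ + φ < π` such that, with weight `η(x) = sin(θx + φ)`, every classical solution
satisfies the fading memory ISS estimate in the weighted sup norm. -/
theorem example3_1
    (σ : ℝ) (hσ : 0 < σ)
    (κ r : ℝ → ℝ) (hκ_cont : Continuous κ) (hr_cont : Continuous r)
    (hκ_pos : ∀ v : ℝ, 0 < κ v)
    (hsup : ∃ K : ℝ, K < Real.pi ^ 2 ∧ ∀ v : ℝ, (σ + r v) / κ v ≤ K) :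
    ∃ θ ∈ Set.Ioo 0 Real.pi, ∃ φ > (0:ℝ), θ + φ < Real.pi ∧
      ∀ T > (0:ℝ), ∀ d₀ d₁ : ℝ → ℝ, ∀ f u ut ux uxx : ℝ → ℝ → ℝ,
        ContinuousOn d₀ (Set.Icc 0 T) → ContinuousOn d₁ (Set.Icc 0 T) →
        ContinuousOn (fun p : ℝ × ℝ => f p.1 p.2) (Set.Icc 0 T ×ˢ Set.Icc 0 1) →
        ContinuousOn (fun p : ℝ × ℝ => u p.1 p.2) (Set.Icc 0 T ×ˢ Set.Icc 0 1) →
        (∀ t ∈ Set.Ioc (0:ℝ) T, ∀ x ∈ Set.Icc (0:ℝ) 1,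
          HasDerivWithinAt (fun τ => u τ x) (ut t x) (Set.Ioc 0 T) t) →
        ContinuousOn (fun p : ℝ × ℝ => ut p.1 p.2) (Set.Ioc 0 T ×ˢ Set.Icc 0 1) →
        (∀ t ∈ Set.Ioc (0:ℝ) T, ∀ x ∈ Set.Icc (0:ℝ) 1,
          HasDerivWithinAt (u t) (ux t x) (Set.Icc 0 1) x) →
        (∀ t ∈ Set.Ioc (0:ℝ) T, ∀ x ∈ Set.Icc (0:ℝ) 1,
          HasDerivWithinAt (ux t) (uxx t x) (Set.Icc 0 1) x) →
        (∀ t ∈ Set.Ioc (0:ℝ) T, ContinuousOn (uxx t) (Set.Icc 0 1)) →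
        (∀ t ∈ Set.Ioc (0:ℝ) T, ∀ x ∈ Set.Icc (0:ℝ) 1,
          ut t x = κ (u t x) * uxx t x + r (u t x) * u t x + f t x) →
        (∀ t ∈ Set.Icc (0:ℝ) T, u t 0 = d₀ t ∧ u t 1 = d₁ t) →
        ∀ ζ ∈ Set.Ico (0:ℝ) σ, ∀ t ∈ Set.Ioc (0:ℝ) T,
          sSup ((fun x => |u t x| / Real.sin (θ * x + φ)) '' Set.Icc 0 1) ≤
            max (Real.exp (-ζ * t) *
                  sSup ((fun x => |u 0 x| / Real.sin (θ * x + φ)) '' Set.Icc 0 1))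
              (sSup ((fun s =>
                  max (max (|d₀ s| / Real.sin (θ * 0 + φ)) (|d₁ s| / Real.sin (θ * 1 + φ)))
                    (sSup ((fun x => |f s x| / Real.sin (θ * x + φ)) '' Set.Ioo 0 1) /
                      (σ - ζ)) *
                  Real.exp (-ζ * (t - s))) '' Set.Ioc 0 t)) := by
  obtain ⟨K, hKpi, hKle⟩ := hsup
  have hpi : 0 < Real.pi := Real.pi_pos
  set K' := max K 0 with hK'def
  have hK'0 : 0 ≤ K' := le_max_right _ _
  have hK'pi : K' < Real.pi ^ 2 := max_lt hKpi (by positivity)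
  set θ := Real.sqrt ((K' + Real.pi ^ 2) / 2) with hθdef
  have hargpos : 0 < (K' + Real.pi ^ 2) / 2 := by positivity
  have hθsq : θ ^ 2 = (K' + Real.pi ^ 2) / 2 := Real.sq_sqrt hargpos.le
  have hθpos : 0 < θ := Real.sqrt_pos.2 hargpos
  have hθpi : θ < Real.pi := by
    have h1 : θ < Real.sqrt (Real.pi ^ 2) :=
      Real.sqrt_lt_sqrt hargpos.le (by linarith)
    rwa [Real.sqrt_sq hpi.le] at h1
  have hKθ : K ≤ θ ^ 2 := by
    have : K ≤ K' := le_max_left _ _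
    linarith [hθsq, hK'pi]
  have hrκ : ∀ v : ℝ, σ + r v ≤ κ v * θ ^ 2 := by
    intro v
    have h1 := hKle v
    have h2 := hκ_pos v
    rw [div_le_iff₀ h2] at h1
    nlinarith [mul_le_mul_of_nonneg_left hKθ h2.le]
  set φ := (Real.pi - θ) / 2 with hφdef
  have hφpos : 0 < φ := by rw [hφdef]; linarith
  have hθφ : θ + φ < Real.pi := by rw [hφdef]; linarith
  have hθmem : θ ∈ Set.Ioo 0 Real.pi := ⟨hθpos, hθpi⟩
  refine ⟨θ, hθmem, φ, hφpos, hθφ, ?_⟩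
  intro T hT d₀ d₁ f u ut ux uxx hd₀c hd₁c hfc huc hut hutc hux huxx huxxc hpde hbc ζ hζmem t htmem
  obtain ⟨hζ0, hζσ⟩ := hζmem
  obtain ⟨ht0, htT⟩ := htmem
  have h0I : (0:ℝ) ∈ Set.Icc (0:ℝ) 1 := ⟨le_rfl, by norm_num⟩
  have hη : ∀ {x : ℝ}, x ∈ Set.Icc (0:ℝ) 1 → 0 < Real.sin (θ * x + φ) :=
    fun hx => eta_pos hθmem hφpos hθφ hx
  have h0T : (0:ℝ) ∈ Set.Icc (0:ℝ) T := ⟨le_rfl, hT.le⟩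
  have hIocsub : Set.Ioc (0:ℝ) t ⊆ Set.Ioc 0 T := Set.Ioc_subset_Ioc_right htT
  have hIccsub : Set.Icc (0:ℝ) t ⊆ Set.Icc 0 T := Set.Icc_subset_Icc_right htT
  -- global bounds
  obtain ⟨Cf, hCf⟩ := (isCompact_Icc.prod isCompact_Icc).exists_bound_of_continuousOn hfc
  have hCf' : ∀ s ∈ Set.Icc (0:ℝ) T, ∀ x ∈ Set.Icc (0:ℝ) 1, |f s x| ≤ Cf := by
    intro s hs x hx
    have := hCf (s, x) (Set.mk_mem_prod hs hx)
    simpa [Real.norm_eq_abs] using this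
  have hCf0 : 0 ≤ Cf := le_trans (abs_nonneg _) (hCf' 0 h0T 0 h0I)
  obtain ⟨Cd₀, hCd₀⟩ := isCompact_Icc.exists_bound_of_continuousOn hd₀c
  obtain ⟨Cd₁, hCd₁⟩ := isCompact_Icc.exists_bound_of_continuousOn hd₁c
  -- minimum of the weight
  have hsincont : ContinuousOn (fun x : ℝ => Real.sin (θ * x + φ)) (Set.Icc 0 1) :=
    (Real.continuous_sin.comp
      ((continuous_const.mul continuous_id).add continuous_const)).continuousOn
  obtain ⟨xm, hxmI, hxmmin⟩ := isCompact_Icc.exists_isMinOn ⟨0, h0I⟩ hsincont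
  set mη := Real.sin (θ * xm + φ) with hmηdef
  have hmηpos : 0 < mη := hη hxmI
  have hmηle : ∀ y ∈ Set.Icc (0:ℝ) 1, mη ≤ Real.sin (θ * y + φ) := fun y hy => hxmmin hy
  -- the inner sup for f
  set F : ℝ → ℝ := fun s =>
    sSup ((fun x => |f s x| / Real.sin (θ * x + φ)) '' Set.Ioo 0 1) with hFdef
  have hhalf : (1:ℝ)/2 ∈ Set.Ioo (0:ℝ) 1 := by norm_num
  have hFbdd : ∀ s ∈ Set.Icc (0:ℝ) T,
      BddAbove ((fun x => |f s x| / Real.sin (θ * x + φ)) '' Set.Ioo 0 1) := by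
    intro s hs
    refine ⟨Cf / mη, ?_⟩
    rintro v ⟨x, hx, rfl⟩
    exact div_le_div₀ hCf0 (hCf' s hs x (Set.Ioo_subset_Icc_self hx)) hmηpos
      (hmηle x (Set.Ioo_subset_Icc_self hx))
  have hFle : ∀ s ∈ Set.Icc (0:ℝ) T, F s ≤ Cf / mη := by
    intro s hs
    refine csSup_le ⟨_, Set.mem_image_of_mem _ hhalf⟩ ?_
    rintro v ⟨x, hx, rfl⟩
    exact div_le_div₀ hCf0 (hCf' s hs x (Set.Ioo_subset_Icc_self hx)) hmηpos
      (hmηle x (Set.Ioo_subset_Icc_self hx))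
  have hfF : ∀ s ∈ Set.Icc (0:ℝ) T, ∀ x ∈ Set.Ioo (0:ℝ) 1,
      |f s x| ≤ F s * Real.sin (θ * x + φ) := by
    intro s hs x hx
    have h1 : |f s x| / Real.sin (θ * x + φ) ≤ F s :=
      le_csSup (hFbdd s hs) (Set.mem_image_of_mem _ hx)
    rwa [div_le_iff₀ (hη (Set.Ioo_subset_Icc_self hx))] at h1
  -- combined boundary/input term
  set B : ℝ → ℝ := fun s =>
    max (max (|d₀ s| / Real.sin (θ * 0 + φ)) (|d₁ s| / Real.sin (θ * 1 + φ)))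
      (F s / (σ - ζ)) with hBdef
  have hσζ : 0 < σ - ζ := by linarith
  have hB0 : ∀ s, 0 ≤ B s := fun s =>
    le_trans (div_nonneg (abs_nonneg _) (hη h0I).le)
      (le_trans (le_max_left _ _) (le_max_left _ _))
  have hBle : ∀ s ∈ Set.Icc (0:ℝ) T, B s ≤
      max (max (Cd₀ / Real.sin (θ * 0 + φ)) (Cd₁ / Real.sin (θ * 1 + φ)))
        ((Cf / mη) / (σ - ζ)) := by
    intro s hs
    refine max_le_max (max_le_max ?_ ?_) ?_
    · exact (div_le_div_iff_of_pos_right (hη h0I)).2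
        (by simpa [Real.norm_eq_abs] using hCd₀ s hs)
    · exact (div_le_div_iff_of_pos_right (hη ⟨by norm_num, le_rfl⟩)).2
        (by simpa [Real.norm_eq_abs] using hCd₁ s hs)
    · exact (div_le_div_iff_of_pos_right hσζ).2 (hFle s hs)
  set V0 := sSup ((fun x => |u 0 x| / Real.sin (θ * x + φ)) '' Set.Icc 0 1) with hV0def
  set SB := sSup ((fun s =>
      max (max (|d₀ s| / Real.sin (θ * 0 + φ)) (|d₁ s| / Real.sin (θ * 1 + φ)))
        (sSup ((fun x => |f s x| / Real.sin (θ * x + φ)) '' Set.Ioo 0 1) /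
          (σ - ζ)) *
      Real.exp (-ζ * (t - s))) '' Set.Ioc 0 t) with hSBdef
  set M := max (Real.exp (-ζ * t) * V0) SB with hMdef
  have hSBbdd : BddAbove ((fun s =>
      max (max (|d₀ s| / Real.sin (θ * 0 + φ)) (|d₁ s| / Real.sin (θ * 1 + φ)))
        (sSup ((fun x => |f s x| / Real.sin (θ * x + φ)) '' Set.Ioo 0 1) /
          (σ - ζ)) *
      Real.exp (-ζ * (t - s))) '' Set.Ioc 0 t) := by
    refine ⟨max (max (Cd₀ / Real.sin (θ * 0 + φ)) (Cd₁ / Real.sin (θ * 1 + φ)))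
      ((Cf / mη) / (σ - ζ)), ?_⟩
    rintro v ⟨s, hs, rfl⟩
    show B s * Real.exp (-ζ * (t - s)) ≤ _
    have h1 : Real.exp (-ζ * (t - s)) ≤ 1 := by
      rw [neg_mul]
      calc Real.exp (-(ζ * (t - s))) ≤ Real.exp 0 :=
            Real.exp_le_exp.2 (neg_nonpos.2 (mul_nonneg hζ0 (by linarith [hs.2])))
        _ = 1 := Real.exp_zero
    calc B s * Real.exp (-ζ * (t - s)) ≤ B s * 1 :=
          mul_le_mul_of_nonneg_left h1 (hB0 s)
      _ = B s := mul_one _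
      _ ≤ _ := hBle s (hIccsub ⟨hs.1.le, hs.2⟩)
  have hSBle : ∀ s ∈ Set.Ioc (0:ℝ) t, B s * Real.exp (-ζ * (t - s)) ≤ SB :=
    fun s hs => le_csSup hSBbdd (Set.mem_image_of_mem _ hs)
  have hSBM : ∀ s ∈ Set.Ioc (0:ℝ) t, B s ≤ M * Real.exp (ζ * (t - s)) := by
    intro s hs
    have h1 : B s * Real.exp (-ζ * (t - s)) ≤ M :=
      le_trans (hSBle s hs) (le_max_right _ _)
    have h2 := exp_cancel ζ (t - s)
    calc B s = B s * Real.exp (-ζ * (t - s)) * Real.exp (ζ * (t - s)) := by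
          rw [mul_assoc, h2, mul_one]
      _ ≤ M * Real.exp (ζ * (t - s)) :=
          mul_le_mul_of_nonneg_right h1 (Real.exp_pos _).le
  have hV0bdd : BddAbove ((fun x => |u 0 x| / Real.sin (θ * x + φ)) '' Set.Icc 0 1) := by
    apply IsCompact.bddAbove_image isCompact_Icc
    apply ContinuousOn.div
    · exact (huc.comp ((continuous_const.prodMk continuous_id).continuousOn)
        (fun x hx => Set.mk_mem_prod h0T hx)).abs
    · exact hsincont
    · intro x hx; exact (hη hx).ne'
  have hu0le : ∀ x ∈ Set.Icc (0:ℝ) 1, |u 0 x| ≤ V0 * Real.sin (θ * x + φ) := by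
    intro x hx
    have h1 : |u 0 x| / Real.sin (θ * x + φ) ≤ V0 :=
      le_csSup hV0bdd (Set.mem_image_of_mem _ hx)
    rwa [div_le_iff₀ (hη hx)] at h1
  have hV00 : 0 ≤ V0 :=
    le_trans (div_nonneg (abs_nonneg _) (hη h0I).le)
      (le_csSup hV0bdd (Set.mem_image_of_mem _ h0I))
  have hM0 : 0 ≤ M :=
    le_trans (mul_nonneg (Real.exp_pos _).le hV00) (le_max_left _ _)
  have hV0M : V0 ≤ M * Real.exp (ζ * t) := by
    have h1 : Real.exp (-ζ * t) * V0 ≤ M := le_max_left _ _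
    have h2 := exp_cancel ζ t
    calc V0 = Real.exp (-ζ * t) * V0 * Real.exp (ζ * t) := by
          rw [mul_comm (Real.exp (-ζ * t)) V0, mul_assoc, h2, mul_one]
      _ ≤ M * Real.exp (ζ * t) := mul_le_mul_of_nonneg_right h1 (Real.exp_pos _).le
  -- restricted hypotheses
  have hucont' : ContinuousOn (fun p : ℝ × ℝ => u p.1 p.2)
      (Set.Icc 0 t ×ˢ Set.Icc 0 1) := huc.mono (Set.prod_mono hIccsub subset_rfl)
  have hut' : ∀ s ∈ Set.Ioc (0:ℝ) t, ∀ x ∈ Set.Icc (0:ℝ) 1,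
      HasDerivWithinAt (fun τ => u τ x) (ut s x) (Set.Ioc 0 t) s :=
    fun s hs x hx => (hut s (hIocsub hs) x hx).mono hIocsub
  have hux' : ∀ s ∈ Set.Ioc (0:ℝ) t, ∀ x ∈ Set.Icc (0:ℝ) 1,
      HasDerivWithinAt (u s) (ux s x) (Set.Icc 0 1) x :=
    fun s hs x hx => hux s (hIocsub hs) x hx
  have huxx' : ∀ s ∈ Set.Ioc (0:ℝ) t, ∀ x ∈ Set.Icc (0:ℝ) 1,
      HasDerivWithinAt (ux s) (uxx s x) (Set.Icc 0 1) x :=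
    fun s hs x hx => huxx s (hIocsub hs) x hx
  have hpde' : ∀ s ∈ Set.Ioc (0:ℝ) t, ∀ x ∈ Set.Icc (0:ℝ) 1,
      ut s x = κ (u s x) * uxx s x + r (u s x) * u s x + f s x :=
    fun s hs x hx => hpde s (hIocsub hs) x hx
  have hbc' : ∀ s ∈ Set.Ioc (0:ℝ) t, u s 0 = d₀ s ∧ u s 1 = d₁ s :=
    fun s hs => hbc s (hIccsub ⟨hs.1.le, hs.2⟩)
  have hbd0 : ∀ s ∈ Set.Ioc (0:ℝ) t,
      |u s 0| ≤ M * Real.exp (ζ * (t - s)) * Real.sin (θ * 0 + φ) := by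
    intro s hs
    rw [(hbc' s hs).1]
    have h1 : |d₀ s| / Real.sin (θ * 0 + φ) ≤ B s :=
      le_trans (le_max_left _ _) (le_max_left _ _)
    rw [div_le_iff₀ (hη h0I)] at h1
    calc |d₀ s| ≤ B s * Real.sin (θ * 0 + φ) := h1
      _ ≤ M * Real.exp (ζ * (t - s)) * Real.sin (θ * 0 + φ) :=
          mul_le_mul_of_nonneg_right (hSBM s hs) (hη h0I).le
  have hbd1 : ∀ s ∈ Set.Ioc (0:ℝ) t,
      |u s 1| ≤ M * Real.exp (ζ * (t - s)) * Real.sin (θ * 1 + φ) := by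
    intro s hs
    rw [(hbc' s hs).2]
    have h1 : |d₁ s| / Real.sin (θ * 1 + φ) ≤ B s :=
      le_trans (le_max_right _ _) (le_max_left _ _)
    rw [div_le_iff₀ (hη ⟨by norm_num, le_rfl⟩)] at h1
    calc |d₁ s| ≤ B s * Real.sin (θ * 1 + φ) := h1
      _ ≤ M * Real.exp (ζ * (t - s)) * Real.sin (θ * 1 + φ) :=
          mul_le_mul_of_nonneg_right (hSBM s hs) (hη ⟨by norm_num, le_rfl⟩).le
  have hfM : ∀ s ∈ Set.Ioc (0:ℝ) t, ∀ x ∈ Set.Ioo (0:ℝ) 1,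
      |f s x| ≤ (σ - ζ) * M * Real.exp (ζ * (t - s)) * Real.sin (θ * x + φ) := by
    intro s hs x hx
    have hsT : s ∈ Set.Icc (0:ℝ) T := hIccsub ⟨hs.1.le, hs.2⟩
    have h2 : F s ≤ (σ - ζ) * (M * Real.exp (ζ * (t - s))) := by
      have h3 : F s / (σ - ζ) ≤ B s := le_max_right _ _
      rw [div_le_iff₀ hσζ] at h3
      calc F s ≤ B s * (σ - ζ) := h3
        _ ≤ M * Real.exp (ζ * (t - s)) * (σ - ζ) :=
            mul_le_mul_of_nonneg_right (hSBM s hs) hσζ.le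
        _ = (σ - ζ) * (M * Real.exp (ζ * (t - s))) := by ring
    calc |f s x| ≤ F s * Real.sin (θ * x + φ) := hfF s hsT x hx
      _ ≤ (σ - ζ) * (M * Real.exp (ζ * (t - s))) * Real.sin (θ * x + φ) :=
          mul_le_mul_of_nonneg_right h2 (hη (Set.Ioo_subset_Icc_self hx)).le
      _ = (σ - ζ) * M * Real.exp (ζ * (t - s)) * Real.sin (θ * x + φ) := by ring
  have h0M : ∀ x ∈ Set.Icc (0:ℝ) 1,
      |u 0 x| ≤ M * Real.exp (ζ * t) * Real.sin (θ * x + φ) := by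
    intro x hx
    calc |u 0 x| ≤ V0 * Real.sin (θ * x + φ) := hu0le x hx
      _ ≤ M * Real.exp (ζ * t) * Real.sin (θ * x + φ) :=
          mul_le_mul_of_nonneg_right hV0M (hη hx).le
  have hup := one_sided θ φ σ ζ t hθmem hφpos hθφ hζ0 hζσ ht0
    (fun s x => κ (u s x)) (fun s x => r (u s x)) f u ut ux uxx
    (fun s _ x _ => hκ_pos _) (fun s _ x _ => hrκ _)
    hucont' hut' hux' huxx' hpde' M hM0
    (fun x hx => le_trans (le_abs_self _) (h0M x hx))
    (fun s hs => le_trans (le_abs_self _) (hbd0 s hs))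
    (fun s hs => le_trans (le_abs_self _) (hbd1 s hs))
    (fun s hs x hx => le_trans (le_abs_self _) (hfM s hs x hx))
  have hdn := one_sided θ φ σ ζ t hθmem hφpos hθφ hζ0 hζσ ht0
    (fun s x => κ (u s x)) (fun s x => r (u s x)) (fun s x => -f s x)
    (fun s x => -u s x) (fun s x => -ut s x) (fun s x => -ux s x) (fun s x => -uxx s x)
    (fun s _ x _ => hκ_pos _) (fun s _ x _ => hrκ _)
    hucont'.neg
    (fun s hs x hx => (hut' s hs x hx).neg)
    (fun s hs x hx => (hux' s hs x hx).neg)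
    (fun s hs x hx => (huxx' s hs x hx).neg)
    (fun s hs x hx => by
      have h := hpde' s hs x hx
      linarith)
    M hM0
    (fun x hx => le_trans (neg_le_abs _) (h0M x hx))
    (fun s hs => le_trans (neg_le_abs _) (hbd0 s hs))
    (fun s hs => le_trans (neg_le_abs _) (hbd1 s hs))
    (fun s hs x hx => le_trans (neg_le_abs _) (hfM s hs x hx))
  have habs : ∀ x ∈ Set.Icc (0:ℝ) 1, |u t x| ≤ M * Real.sin (θ * x + φ) := by
    intro x hx
    have h1 := hup x hx
    have h2 := hdn x hx
    exact abs_le.2 ⟨by linarith, h1⟩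
  refine csSup_le ⟨_, Set.mem_image_of_mem _ h0I⟩ ?_
  rintro v ⟨x, hx, rfl⟩
  show |u t x| / Real.sin (θ * x + φ) ≤ M
  rw [div_le_iff₀ (hη hx)]
  exact habs x hx
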